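/- For all natural numbers m and k with m ≥ 4 and 1 ≤ k ≤ m, one has 2 · Σ_{i=0}^{k−1} C(m, i) ≤ m^k, where C(m, i) denotes the binomial coefficient. -/
import Mathlib

/-- For `m ≥ 4` and `1 ≤ k ≤ m`: `2 · Σ_{i<k} C(m,i) ≤ m^k`. -/
theorem stmt4 (m k : ℕ) (hm : 4 ≤ m) (hk1 : 1 ≤ k) (hkm : k ≤ m) :
    2 * ∑ i ∈ Finset.range k, Nat.choose m i ≤ m ^ k := by
  clear hkm
  induction k, hk1 using Nat.le_induction with
  | base => simpa using by omega
  | succ n hn ih =>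
    rw [Finset.sum_range_succ, Nat.mul_add, pow_succ]
    have h1 : 2 * Nat.choose m n ≤ 3 * m ^ n := by
      have := Nat.choose_le_pow m n
      omega
    have h2 : m ^ n * 4 ≤ m ^ n * m := Nat.mul_le_mul_left _ hm
    linarith
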